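/- For distinct positive integers m and n, the smallest positive integer k lying in the ideal of ℤ[x] generated by Φ_m(x) and Φ_n(x) is: k = p if {m,n} = {d, d·p^t} for some d, prime p, and t ≥ 1; and k = 1 otherwise. -/

import Mathlib

open Polynomial Finset

lemma mem_span_cyclo (d p t : ℕ) (hp : p.Prime) (hd : 0 < d) (ht : 1 ≤ t) :
    C (p : ℤ) ∈ Ideal.span {cyclotomic d ℤ, cyclotomic (d * p ^ t) ℤ} := by
  set r := d * p ^ (t - 1) with hr
  have hrpos : 0 < r := Nat.mul_pos hd (pow_pos hp.pos _)
  have hN : d * p ^ t = r * p := by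
    rw [hr, mul_assoc, ← pow_succ, Nat.sub_add_cancel ht]
  set G : ℤ[X] := ∑ i ∈ Finset.range p, ((X : ℤ[X]) ^ r) ^ i with hG
  have hXr_ne : ((X : ℤ[X]) ^ r - 1) ≠ 0 := by
    have := X_pow_sub_C_ne_zero hrpos (1 : ℤ)
    rwa [map_one] at this
  have h1 : cyclotomic (d * p ^ t) ℤ ∣ G := by
    have hsub : Nat.divisors r ⊆ Nat.divisors (r * p) :=
      Nat.divisors_subset_of_dvd (Nat.mul_ne_zero hrpos.ne' hp.pos.ne') ⟨p, rfl⟩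
    have hps := Finset.prod_sdiff (f := fun e => cyclotomic e ℤ) hsub
    have hgeom : G * ((X : ℤ[X]) ^ r - 1) = (X : ℤ[X]) ^ (r * p) - 1 := by
      rw [hG, geom_sum_mul, ← pow_mul]
    have hEq : (∏ e ∈ Nat.divisors (r * p) \ Nat.divisors r, cyclotomic e ℤ) = G := by
      apply mul_right_cancel₀ hXr_ne
      rw [hgeom, ← prod_cyclotomic_eq_X_pow_sub_one (Nat.mul_pos hrpos hp.pos) ℤ,
        ← prod_cyclotomic_eq_X_pow_sub_one hrpos ℤ, hps]
    have hmem : (r * p) ∈ Nat.divisors (r * p) \ Nat.divisors r := by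
      rw [Finset.mem_sdiff, Nat.mem_divisors, Nat.mem_divisors]
      refine ⟨⟨dvd_rfl, Nat.mul_ne_zero hrpos.ne' hp.pos.ne'⟩, fun hc => ?_⟩
      have := Nat.le_of_dvd hrpos hc.1
      nlinarith [hp.two_le]
    rw [hN, ← hEq]
    exact Finset.dvd_prod_of_mem _ hmem
  have h2 : cyclotomic d ℤ ∣ G - C (p : ℤ) := by
    have hGP : G - C (p : ℤ) = ∑ i ∈ Finset.range p, (((X : ℤ[X]) ^ r) ^ i - 1) := by
      rw [Finset.sum_sub_distrib, Finset.sum_const, Finset.card_range]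
      congr 1
      simp [nsmul_eq_mul]
    rw [hGP]
    refine Finset.dvd_sum fun i _ => ?_
    have hrw : ((X : ℤ[X]) ^ r) ^ i - 1 = ((X : ℤ[X]) ^ d) ^ (p ^ (t - 1) * i) - 1 ^ (p ^ (t - 1) * i) := by
      rw [one_pow, ← pow_mul, ← pow_mul, hr, mul_assoc]
    rw [hrw]
    exact (cyclotomic.dvd_X_pow_sub_one d ℤ).trans (sub_dvd_pow_sub_pow _ _ _)
  obtain ⟨u, hu⟩ := h1
  obtain ⟨v, hv⟩ := h2
  rw [Ideal.mem_span_pair]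
  exact ⟨-v, u, by linear_combination hv - hu⟩


lemma p_dvd_of_mem_span (d p t j : ℕ) (hp : p.Prime) (hd : 0 < d) (ht : 1 ≤ t)
    (hj : C (j : ℤ) ∈ Ideal.span {cyclotomic d ℤ, cyclotomic (d * p ^ t) ℤ}) : p ∣ j := by
  haveI : Fact p.Prime := ⟨hp⟩
  set K := AlgebraicClosure (ZMod p)
  set a := d.factorization p with ha
  set d0 := d / p ^ a with hd0def
  have hd0 : ¬ p ∣ d0 := Nat.not_dvd_ordCompl hp hd.ne'
  have hdd : p ^ a * d0 = d := Nat.ordProj_mul_ordCompl_eq_self d p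
  have hd0pos : 0 < d0 := Nat.ordCompl_pos p hd.ne'
  haveI : NeZero ((d0 : K)) := NeZero.of_not_dvd K hd0
  obtain ⟨ζ, hζ⟩ := IsAlgClosed.exists_root (cyclotomic d0 K) (by
    rw [degree_cyclotomic]
    exact_mod_cast (Nat.totient_pos.mpr hd0pos).ne')
  have hprim : IsPrimitiveRoot ζ d0 := isRoot_cyclotomic_iff.mp hζ
  have h1 : eval ζ (cyclotomic d K) = 0 := by
    rw [← hdd]
    exact isRoot_cyclotomic_prime_pow_mul_iff_of_charP.mpr hprim
  have h2 : eval ζ (cyclotomic (d * p ^ t) K) = 0 := by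
    have hE : d * p ^ t = p ^ (a + t) * d0 := by rw [← hdd]; ring
    rw [hE]
    exact isRoot_cyclotomic_prime_pow_mul_iff_of_charP.mpr hprim
  obtain ⟨f, g, hfg⟩ := Ideal.mem_span_pair.mp hj
  have h3 := congrArg (fun q : ℤ[X] => eval ζ (q.map (Int.castRingHom K))) hfg
  simp only [Polynomial.map_add, Polynomial.map_mul, map_cyclotomic, eval_add, eval_mul,
    h1, h2, mul_zero, add_zero, Polynomial.map_C, eval_C, zero_add] at h3
  have h4 : ((j : ℤ) : K) = 0 := by simpa using h3.symm
  have h5 : (p : ℤ) ∣ (j : ℤ) := (CharP.intCast_eq_zero_iff K p _).mp h4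
  exact_mod_cast h5


lemma span_cyclo_eq_top (m n : ℕ) (hm : 0 < m) (hn : 0 < n) (hmn : m ≠ n)
    (h : ¬ ∃ d p t : ℕ, p.Prime ∧ 1 ≤ t ∧
        ((m = d ∧ n = d * p ^ t) ∨ (n = d ∧ m = d * p ^ t))) :
    Ideal.span {cyclotomic m ℤ, cyclotomic n ℤ} = ⊤ := by
  by_contra hne
  obtain ⟨M, hM, hle⟩ := Ideal.exists_le_maximal _ hne
  haveI := hM
  haveI : M.IsPrime := hM.isPrime
  set K := ℤ[X] ⧸ M with hK
  set φ : ℤ[X] →+* K := Ideal.Quotient.mk M with hφ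
  set α : K := φ X with hα
  have key : ∀ f : ℤ[X], f ∈ M → eval α (f.map (Int.castRingHom K)) = 0 := by
    intro f hf
    have h0 : φ f = 0 := Ideal.Quotient.eq_zero_iff_mem.mpr hf
    have h1 : φ f = eval₂ (φ.comp C) (φ X) f := by
      conv_lhs => rw [← eval₂_C_X (p := f)]
      exact hom_eval₂ f C φ X
    rw [eval_map, ← Subsingleton.elim (φ.comp C) (Int.castRingHom K), ← h1, h0]
  have hmK : eval α (cyclotomic m K) = 0 := by
    have := key (cyclotomic m ℤ) (hle (Ideal.subset_span (Set.mem_insert _ _)))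
    rwa [map_cyclotomic] at this
  have hnK : eval α (cyclotomic n K) = 0 := by
    have := key (cyclotomic n ℤ)
      (hle (Ideal.subset_span (Set.mem_insert_of_mem _ rfl)))
    rwa [map_cyclotomic] at this
  set p := ringChar K with hpdef
  haveI : CharP K p := ringChar.charP K
  rcases CharP.char_is_prime_or_zero K p with hp | hp0
  · haveI : Fact p.Prime := ⟨hp⟩
    have prim : ∀ l : ℕ, 0 < l → eval α (cyclotomic l K) = 0 →
        IsPrimitiveRoot α (l / p ^ (l.factorization p)) := by
      intro l hl hroot
      have hnd : ¬ p ∣ l / p ^ (l.factorization p) := Nat.not_dvd_ordCompl hp hl.ne'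
      haveI : NeZero (((l / p ^ (l.factorization p) : ℕ) : K)) := NeZero.of_not_dvd K hnd
      rw [← Nat.ordProj_mul_ordCompl_eq_self l p] at hroot
      exact isRoot_cyclotomic_prime_pow_mul_iff_of_charP.mp hroot
    have h1 := prim m hm hmK
    have h2 := prim n hn hnK
    have hmn0 : m / p ^ (m.factorization p) = n / p ^ (n.factorization p) := h1.unique h2
    set a := m.factorization p with hadef
    set b := n.factorization p with hbdef
    set d0 := m / p ^ a with hd0
    have hmd : p ^ a * d0 = m := Nat.ordProj_mul_ordCompl_eq_self m p
    have hnd : p ^ b * d0 = n := by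
      rw [show p ^ b * d0 = p ^ b * (n / p ^ b) by rw [hmn0]]
      exact Nat.ordProj_mul_ordCompl_eq_self n p
    have hab : a ≠ b := by
      intro hE; exact hmn (by rw [← hmd, ← hnd, hE])
    rcases hab.lt_or_gt with hlt | hlt
    · refine h ⟨m, p, b - a, hp, by omega, Or.inl ⟨rfl, ?_⟩⟩
      rw [← hmd, ← hnd]
      rw [mul_assoc, mul_comm d0 (p ^ (b - a)), ← mul_assoc, ← pow_add]
      congr 2
      omega
    · refine h ⟨n, p, a - b, hp, by omega, Or.inr ⟨rfl, ?_⟩⟩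
      rw [← hmd, ← hnd]
      rw [mul_assoc, mul_comm d0 (p ^ (a - b)), ← mul_assoc, ← pow_add]
      congr 2
      omega
  · haveI : CharP K 0 := hp0 ▸ (ringChar.charP K)
    haveI : CharZero K := CharP.charP_to_charZero K
    haveI : NeZero ((m : K)) := ⟨Nat.cast_ne_zero.mpr hm.ne'⟩
    haveI : NeZero ((n : K)) := ⟨Nat.cast_ne_zero.mpr hn.ne'⟩
    have h1 : IsPrimitiveRoot α m := isRoot_cyclotomic_iff.mp hmK
    have h2 : IsPrimitiveRoot α n := isRoot_cyclotomic_iff.mp hnK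
    exact hmn (h1.unique h2)


lemma rep_p_unique {m n d p t d' p' t' : ℕ} (hm : 0 < m) (hn : 0 < n)
    (hp : p.Prime) (ht : 1 ≤ t) (hp' : p'.Prime) (ht' : 1 ≤ t')
    (h1 : (m = d ∧ n = d * p ^ t) ∨ (n = d ∧ m = d * p ^ t))
    (h2 : (m = d' ∧ n = d' * p' ^ t') ∨ (n = d' ∧ m = d' * p' ^ t')) : p = p' := by
  have hpow : ∀ q s : ℕ, q.Prime → 1 ≤ s → 2 ≤ q ^ s := fun q s hq hs =>
    le_trans hq.two_le (Nat.le_self_pow (by omega) q)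
  have key : ∀ {q s q' s' : ℕ}, q.Prime → q'.Prime → 1 ≤ s → 1 ≤ s' →
      q ^ s = q' ^ s' → q = q' := by
    intro q s q' s' hq hq' hs hs' hE
    have hdvd : q ∣ q' ^ s' := hE ▸ dvd_pow_self q (by omega : s ≠ 0)
    exact (Nat.prime_dvd_prime_iff_eq hq hq').mp (hq.dvd_of_dvd_pow hdvd)
  have P2 := hpow p t hp ht
  have P2' := hpow p' t' hp' ht'
  rcases h1 with ⟨e1, e2⟩ | ⟨e1, e2⟩ <;> rcases h2 with ⟨f1, f2⟩ | ⟨f1, f2⟩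
  · have hE : d * p ^ t = d * p' ^ t' := by rw [← e2, f2, ← f1, e1]
    have hd : 0 < d := by omega
    exact key hp hp' ht ht' (Nat.eq_of_mul_eq_mul_left hd hE)
  · exfalso
    have hE : m = m * (p ^ t * p' ^ t') := by
      calc m = n * p' ^ t' := by rw [f2, ← f1]
        _ = m * p ^ t * p' ^ t' := by rw [e2, e1]
        _ = m * (p ^ t * p' ^ t') := by ring
    nlinarith
  · exfalso
    have hE : n = n * (p ^ t * p' ^ t') := by
      calc n = m * p' ^ t' := by rw [f2, ← f1]
        _ = n * p ^ t * p' ^ t' := by rw [e2, e1]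
        _ = n * (p ^ t * p' ^ t') := by ring
    nlinarith
  · have hE : d * p ^ t = d * p' ^ t' := by rw [← e2, f2, ← f1, e1]
    have hd : 0 < d := by omega
    exact key hp hp' ht ht' (Nat.eq_of_mul_eq_mul_left hd hE)

theorem cyclotomic_ideal_min_nat (m n : ℕ) (hm : 0 < m) (hn : 0 < n) (hmn : m ≠ n) :
    ∃ k : ℕ, 0 < k ∧
      C (k : ℤ) ∈ Ideal.span {cyclotomic m ℤ, cyclotomic n ℤ} ∧
      (∀ j : ℕ, 0 < j → C (j : ℤ) ∈ Ideal.span {cyclotomic m ℤ, cyclotomic n ℤ} → k ≤ j) ∧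
      (∀ d p t : ℕ, p.Prime → 1 ≤ t →
        ((m = d ∧ n = d * p ^ t) ∨ (n = d ∧ m = d * p ^ t)) → k = p) ∧
      ((¬ ∃ d p t : ℕ, p.Prime ∧ 1 ≤ t ∧
        ((m = d ∧ n = d * p ^ t) ∨ (n = d ∧ m = d * p ^ t))) → k = 1) := by
  by_cases h : ∃ d p t : ℕ, p.Prime ∧ 1 ≤ t ∧
      ((m = d ∧ n = d * p ^ t) ∨ (n = d ∧ m = d * p ^ t))
  · obtain ⟨d, p, t, hp, ht, hrep⟩ := h
    have hspan : Ideal.span {cyclotomic m ℤ, cyclotomic n ℤ}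
        = Ideal.span {cyclotomic d ℤ, cyclotomic (d * p ^ t) ℤ} := by
      rcases hrep with ⟨e1, e2⟩ | ⟨e1, e2⟩
      · rw [e1, e2]
      · rw [e1, e2, Ideal.span_pair_comm]
    have hd : 0 < d := by rcases hrep with ⟨e1, _⟩ | ⟨e1, _⟩ <;> omega
    refine ⟨p, hp.pos, ?_, ?_, ?_, ?_⟩
    · rw [hspan]; exact mem_span_cyclo d p t hp hd ht
    · intro j hj hmem
      rw [hspan] at hmem
      exact Nat.le_of_dvd hj (p_dvd_of_mem_span d p t j hp hd ht hmem)
    · intro d' p' t' hp' ht' hrep'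
      exact rep_p_unique hm hn hp ht hp' ht' hrep hrep'
    · intro h'
      exact absurd ⟨d, p, t, hp, ht, hrep⟩ h'
  · refine ⟨1, one_pos, ?_, fun j hj _ => hj, ?_, fun _ => rfl⟩
    · rw [span_cyclo_eq_top m n hm hn hmn h]
      exact Submodule.mem_top
    · intro d p t hp ht hrep
      exact absurd ⟨d, p, t, hp, ht, hrep⟩ h
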